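/- Let ℓ ≥ 2 be an integer and (p_i)_{i=0}^{2ℓ−1} probability weights with p_i + p_{i+ℓ} > 0 for all 0 ≤ i ≤ ℓ−1. For each ε ∈ {0,…,ℓ−1} let M_ε be the 2×2 matrix [[p_ε, p_{ε+ℓ}],[p_{2ℓ−1−ε}, p_{ℓ−1−ε}]]. Then the self-similar measure μ satisfying μ = Σ_{i=0}^{2ℓ−1} p_i μ∘S_i^{−1} (where S_i(x)=x/ℓ+i/ℓ for i<ℓ and S_{i+ℓ}(x)=−x/ℓ+(i+1)/ℓ) assigns to each ℓ-adic interval I = I_{ε₁⋯ε_n} the mass μ(I) = ‖M_{ε₁}⋯M_{ε_n}‖₁, where ‖M‖₁ = (1 0) M (1 1)ᵀ. -/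

import Mathlib

open MeasureTheory Filter Topology ENNReal

noncomputable section

/-- The ℓ-adic interval of generation `n` with index `k`. -/
def adicI (ℓ n k : ℕ) : Set ℝ := Set.Ico ((k : ℝ) / ℓ ^ n) ((k + 1 : ℝ) / ℓ ^ n)

/-- The mass of a set for a measure, as a real number. -/
def mss (μ : Measure ℝ) (s : Set ℝ) : ℝ := (μ s).toReal

/-- The `2ℓ` similitudes of ratio `±1/ℓ`. -/
def simMapT (ℓ i : ℕ) (x : ℝ) : ℝ :=
  if i < ℓ then x / ℓ + i / ℓ else -x / ℓ + ((i - ℓ + 1 : ℕ) : ℝ) / ℓ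

/-- The reflection `T(x) = 1 - x`. -/
def refl1 (x : ℝ) : ℝ := 1 - x

/-- The measure `ν = (μ + μ ∘ T)/2`. -/
def nuT (μ : Measure ℝ) : Measure ℝ := (2 : ℝ≥0∞)⁻¹ • (μ + μ.map refl1)

/-- Partition-function sequence `u_n = ∑_{I ∈ F_n, m(I) ≠ 0} m(I)^q`. -/
def uSeq (ℓ : ℕ) (μ : Measure ℝ) (q : ℝ) (n : ℕ) : ℝ :=
  ∑ k ∈ (Finset.range (ℓ ^ n)).filter (fun k => mss μ (adicI ℓ n k) ≠ 0),
    mss μ (adicI ℓ n k) ^ q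

/-- The `L^q`-spectrum `τ(q)` of a measure, defined with a `limsup`. -/
def Lsp (ℓ : ℕ) (μ : Measure ℝ) (q : ℝ) : ℝ :=
  limsup (fun n : ℕ => Real.log (uSeq ℓ μ q n) / (n * Real.log ℓ)) atTop

/-- `‖M‖₁`: the sum of the first-row entries. -/
def normOne (M : Matrix (Fin 2) (Fin 2) ℝ) : ℝ := M 0 0 + M 0 1

/-- `‖M‖`: half of the sum of all entries. -/
def normH2 (M : Matrix (Fin 2) (Fin 2) ℝ) : ℝ := (M 0 0 + M 0 1 + M 1 0 + M 1 1) / 2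

/-- The matrix `M_ε`. -/
def MmatT (ℓ : ℕ) (p : ℕ → ℝ) (ε : ℕ) : Matrix (Fin 2) (Fin 2) ℝ :=
  !![p ε, p (ε + ℓ); p (2 * ℓ - 1 - ε), p (ℓ - 1 - ε)]

/-- The ℓ-adic interval `I_{ε₁⋯ε_n}` associated with a word. -/
def wordI (ℓ n : ℕ) (ε : Fin n → ℕ) : Set ℝ :=
  Set.Ico (∑ i : Fin n, (ε i : ℝ) / ℓ ^ ((i : ℕ) + 1))
    (∑ i : Fin n, (ε i : ℝ) / ℓ ^ ((i : ℕ) + 1) + 1 / ℓ ^ n)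

/-- The ℓ-adic shift `σ(x) = ℓx (mod 1)`. -/
def shiftM (ℓ : ℕ) (x : ℝ) : ℝ := Int.fract (ℓ * x)

/-- `I_n(x)`: the ℓ-adic interval of generation `n` containing `x`. -/
def Iofx (ℓ n : ℕ) (x : ℝ) : Set ℝ := adicI ℓ n (⌊(ℓ : ℝ) ^ n * x⌋).toNat

/-- The level set `E_α(m)` of points of `[0,1)` with local dimension `α`. -/
def ESet (ℓ : ℕ) (μ : Measure ℝ) (α : ℝ) : Set ℝ :=
  {x ∈ Set.Ico (0 : ℝ) 1 |
    Tendsto (fun n : ℕ => -Real.log (mss μ (Iofx ℓ n x)) / (n * Real.log ℓ)) atTop (𝓝 α)}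

section Aux
open Set
lemma simMapT_meas (ℓ i : ℕ) : Measurable (simMapT ℓ i) := by
  unfold simMapT; by_cases h : i < ℓ <;> simp [h] <;> fun_prop
lemma mu_apply (ℓ : ℕ) (p : ℕ → ℝ) (μ : Measure ℝ)
    (hself : μ = ∑ i ∈ Finset.range (2 * ℓ), ENNReal.ofReal (p i) • μ.map (simMapT ℓ i))
    (E : Set ℝ) (hE : MeasurableSet E) :
    μ E = ∑ i ∈ Finset.range (2 * ℓ), ENNReal.ofReal (p i) * μ (simMapT ℓ i ⁻¹' E) := by
  conv_lhs => rw [hself]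
  rw [Measure.finset_sum_apply]
  exact Finset.sum_congr rfl fun i _ => by
    rw [Measure.smul_apply, smul_eq_mul, Measure.map_apply (simMapT_meas ℓ i) hE]

-- the out-of-range sets
def At (t : ℝ) : Set ℝ := Iio (-t) ∪ Ioi (1 + t)

lemma At_meas (t : ℝ) : MeasurableSet (At t) :=
  (measurableSet_Iio).union measurableSet_Ioi

lemma preAt (ℓ i : ℕ) (hℓ : 2 ≤ ℓ) (hi : i < 2 * ℓ) (t : ℝ) (ht : 0 ≤ t) :
    simMapT ℓ i ⁻¹' At t ⊆ At ((ℓ : ℝ) * t) := by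
  have hℓ0 : (0 : ℝ) < ℓ := by positivity
  intro x hx
  simp only [At, mem_preimage, mem_union, mem_Iio, mem_Ioi, simMapT] at hx ⊢
  split_ifs at hx with h
  · have hi1 : (i : ℝ) + 1 ≤ ℓ := by exact_mod_cast h
    have hi0 : (0:ℝ) ≤ i := Nat.cast_nonneg i
    rcases hx with hx | hx
    · left
      rw [← add_div, div_lt_iff₀ hℓ0] at hx
      nlinarith
    · right
      rw [← add_div, lt_div_iff₀ hℓ0] at hx
      nlinarith
  · have hge : ℓ ≤ i := le_of_not_gt h
    have hc : ((i - ℓ + 1 : ℕ) : ℝ) = (i : ℝ) - ℓ + 1 := by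
      rw [Nat.cast_add, Nat.cast_sub hge, Nat.cast_one]
    have hk1 : (1 : ℝ) ≤ (i : ℝ) - ℓ + 1 := by
      have : (ℓ : ℝ) ≤ i := by exact_mod_cast hge
      linarith
    have hk2 : (i : ℝ) - ℓ + 1 ≤ ℓ := by
      have : (i : ℝ) + 1 ≤ 2 * ℓ := by exact_mod_cast hi
      linarith
    rw [hc] at hx
    rcases hx with hx | hx
    · right
      rw [← add_div, div_lt_iff₀ hℓ0] at hx
      nlinarith
    · left
      rw [← add_div, lt_div_iff₀ hℓ0] at hx
      nlinarith

lemma muAt (ℓ : ℕ) (hℓ : 2 ≤ ℓ) (p : ℕ → ℝ) (hp : ∀ i, 0 ≤ p i)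
    (hsum : ∑ i ∈ Finset.range (2 * ℓ), p i = 1)
    (μ : Measure ℝ) [IsProbabilityMeasure μ]
    (hself : μ = ∑ i ∈ Finset.range (2 * ℓ), ENNReal.ofReal (p i) • μ.map (simMapT ℓ i))
    (t : ℝ) (ht : 0 < t) : μ (At t) = 0 := by
  have hstep : ∀ s : ℝ, 0 ≤ s → μ (At s) ≤ μ (At ((ℓ : ℝ) * s)) := by
    intro s hs
    rw [mu_apply ℓ p μ hself (At s) (At_meas s)]
    calc ∑ i ∈ Finset.range (2 * ℓ), ENNReal.ofReal (p i) * μ (simMapT ℓ i ⁻¹' At s)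
        ≤ ∑ i ∈ Finset.range (2 * ℓ), ENNReal.ofReal (p i) * μ (At ((ℓ:ℝ) * s)) := by
          refine Finset.sum_le_sum fun i hi => ?_
          exact mul_le_mul_right (measure_mono (preAt ℓ i hℓ (Finset.mem_range.mp hi) s hs)) _
      _ = (∑ i ∈ Finset.range (2 * ℓ), ENNReal.ofReal (p i)) * μ (At ((ℓ:ℝ) * s)) := by
          rw [Finset.sum_mul]
      _ = μ (At ((ℓ:ℝ) * s)) := by
          rw [← ENNReal.ofReal_sum_of_nonneg (fun i _ => hp i), hsum, ofReal_one, one_mul]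
  have hℓ1 : (1 : ℝ) < ℓ := by exact_mod_cast hℓ.trans_lt' one_lt_two
  have hℓ0 : (0 : ℝ) < ℓ := lt_trans one_pos hℓ1
  have hiter : ∀ n : ℕ, μ (At t) ≤ μ (At ((ℓ : ℝ) ^ n * t)) := by
    intro n
    induction n with
    | zero => simp
    | succ n ih =>
      refine ih.trans ?_
      have := hstep ((ℓ : ℝ) ^ n * t) (by positivity)
      calc μ (At ((ℓ:ℝ) ^ n * t)) ≤ μ (At ((ℓ:ℝ) * ((ℓ:ℝ) ^ n * t))) := this
        _ = μ (At ((ℓ:ℝ) ^ (n+1) * t)) := by ring_nf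
  have hanti : Antitone fun n : ℕ => At ((ℓ : ℝ) ^ n * t) := by
    intro m n hmn
    have : (ℓ : ℝ) ^ m * t ≤ (ℓ : ℝ) ^ n * t :=
      mul_le_mul_of_nonneg_right (pow_le_pow_right₀ hℓ1.le hmn) ht.le
    intro x hx
    simp only [At, mem_union, mem_Iio, mem_Ioi] at hx ⊢
    rcases hx with hx | hx
    · exact Or.inl (lt_of_lt_of_le hx (by linarith))
    · exact Or.inr (lt_of_le_of_lt (by linarith) hx)
  have hempty : ⋂ n : ℕ, At ((ℓ : ℝ) ^ n * t) = ∅ := by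
    ext x
    simp only [mem_iInter, mem_empty_iff_false, iff_false, not_forall]
    obtain ⟨n, hn⟩ := pow_unbounded_of_one_lt ((|x| + 2) / t) hℓ1
    refine ⟨n, ?_⟩
    have hxt : |x| + 2 < (ℓ : ℝ) ^ n * t := by
      rw [div_lt_iff₀ ht] at hn; linarith
    intro hx
    rcases hx with hx | hx
    · have := neg_abs_le x; simp only [mem_Iio] at hx; linarith
    · have := le_abs_self x; simp only [mem_Ioi] at hx; linarith
  have htend : Filter.Tendsto (fun n : ℕ => μ (At ((ℓ : ℝ) ^ n * t))) atTop (nhds 0) := by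
    have := MeasureTheory.tendsto_measure_iInter_atTop
      (fun n => (At_meas _).nullMeasurableSet) hanti ⟨0, measure_ne_top μ _⟩
    rwa [hempty, measure_empty] at this
  have : μ (At t) ≤ 0 := ge_of_tendsto' htend hiter |>.trans_eq rfl
  exact le_antisymm this zero_le

lemma muIio (ℓ : ℕ) (hℓ : 2 ≤ ℓ) (p : ℕ → ℝ) (hp : ∀ i, 0 ≤ p i)
    (hsum : ∑ i ∈ Finset.range (2 * ℓ), p i = 1)
    (μ : Measure ℝ) [IsProbabilityMeasure μ]
    (hself : μ = ∑ i ∈ Finset.range (2 * ℓ), ENNReal.ofReal (p i) • μ.map (simMapT ℓ i)) :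
    μ (Iio 0) = 0 ∧ μ (Ioi 1) = 0 := by
  have hsub : Iio (0:ℝ) ∪ Ioi 1 ⊆ ⋃ n : ℕ, At (1 / (n + 1)) := by
    intro x hx
    rcases hx with hx | hx
    · obtain ⟨n, hn⟩ := exists_nat_one_div_lt (show (0:ℝ) < -x by simpa using hx)
      exact mem_iUnion.mpr ⟨n, Or.inl (by simp only [mem_Iio]; push_cast at hn ⊢; linarith)⟩
    · obtain ⟨n, hn⟩ := exists_nat_one_div_lt (show (0:ℝ) < x - 1 by simp at hx; linarith)
      exact mem_iUnion.mpr ⟨n, Or.inr (by simp only [mem_Ioi]; push_cast at hn ⊢; linarith)⟩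
  have hnull : μ (⋃ n : ℕ, At (1 / (n + 1))) = 0 :=
    measure_iUnion_null fun n => muAt ℓ hℓ p hp hsum μ hself _ (by positivity)
  have h := measure_mono_null hsub hnull
  constructor
  · exact measure_mono_null (subset_union_left) h
  · exact measure_mono_null (subset_union_right) h

lemma atoms_alg (q0 q1 q2 q3 a b : ℝ) (h0 : 0 ≤ q0) (h1 : 0 ≤ q1) (h2 : 0 ≤ q2) (h3 : 0 ≤ q3)
    (hs : q0 + q1 + q2 + q3 ≤ 1) (hq02 : 0 < q0 + q2) (hq13 : 0 < q1 + q3)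
    (ha : 0 ≤ a) (hb : 0 ≤ b) (ea : a = q0 * a + q2 * b) (eb : b = q1 * b + q3 * a) :
    a = 0 ∧ b = 0 := by
  have e1 : (1 - q0) * a = q2 * b := by linarith
  have e2 : (1 - q1) * b = q3 * a := by linarith
  have key : ((1 - q0) * (1 - q1) - q2 * q3) * a = 0 := by nlinarith [e1, e2]
  have hq0 : q0 < 1 := by nlinarith
  have hq1 : q1 < 1 := by nlinarith
  have hposfac : 0 < (1 - q0) * (1 - q1) - q2 * q3 := by nlinarith
  have ha0 : a = 0 := by
    rcases mul_eq_zero.mp key with h | h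
    · linarith
    · exact h
  refine ⟨ha0, ?_⟩
  rw [ha0] at e2
  simp at e2
  rcases e2 with h | h
  · linarith
  · exact h

lemma pre_dir_sing (L c y : ℝ) (hL : 0 < L) :
    (fun x : ℝ => x / L + c / L) ⁻¹' {y} = {L * y - c} := by
  ext x
  simp only [mem_preimage, mem_singleton_iff, ← add_div, div_eq_iff hL.ne']
  constructor <;> intro h <;> linarith

lemma pre_flip_sing (L d y : ℝ) (hL : 0 < L) :
    (fun x : ℝ => -x / L + d / L) ⁻¹' {y} = {d - L * y} := by
  ext x
  simp only [mem_preimage, mem_singleton_iff, ← add_div, div_eq_iff hL.ne']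
  constructor <;> intro h <;> linarith

lemma fdir (ℓ i : ℕ) (hi : i < ℓ) : simMapT ℓ i = fun x : ℝ => x / ℓ + (i : ℝ) / ℓ :=
  funext fun x => by simp [simMapT, hi]

lemma fflip (ℓ i : ℕ) (hi : ℓ ≤ i) :
    simMapT ℓ i = fun x : ℝ => -x / ℓ + ((i - ℓ + 1 : ℕ) : ℝ) / ℓ :=
  funext fun x => by simp [simMapT, Nat.not_lt.mpr hi]

lemma muAtoms (ℓ : ℕ) (hℓ : 2 ≤ ℓ) (p : ℕ → ℝ) (hp : ∀ i, 0 ≤ p i)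
    (hsum : ∑ i ∈ Finset.range (2 * ℓ), p i = 1)
    (hpos : ∀ i < ℓ, 0 < p i + p (i + ℓ))
    (μ : Measure ℝ) [IsProbabilityMeasure μ]
    (hself : μ = ∑ i ∈ Finset.range (2 * ℓ), ENNReal.ofReal (p i) • μ.map (simMapT ℓ i)) :
    μ {(0:ℝ)} = 0 ∧ μ {(1:ℝ)} = 0 := by
  obtain ⟨hIio, hIoi⟩ := muIio ℓ hℓ p hp hsum μ hself
  have hℓ0 : (0:ℝ) < ℓ := by positivity
  -- equation for μ{0}
  have e0 : μ {(0:ℝ)} = ENNReal.ofReal (p 0) * μ {(0:ℝ)} + ENNReal.ofReal (p ℓ) * μ {(1:ℝ)} := by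
    conv_lhs => rw [mu_apply ℓ p μ hself {0} (measurableSet_singleton 0)]
    rw [Finset.sum_eq_add_of_mem 0 ℓ (by simp; omega) (by simp; omega) (by omega)
      (fun c hc hne => ?_)]
    · have P1 : simMapT ℓ 0 ⁻¹' {(0:ℝ)} = {(0:ℝ)} := by
        rw [fdir ℓ 0 (by omega), pre_dir_sing _ _ _ hℓ0]
        norm_num
      have P2 : simMapT ℓ ℓ ⁻¹' {(0:ℝ)} = {(1:ℝ)} := by
        rw [fflip ℓ ℓ le_rfl, pre_flip_sing _ _ _ hℓ0, show ℓ-ℓ+1 = 1 by omega]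
        norm_num
      rw [P1, P2]
    · obtain ⟨h1, h2⟩ := hne
      have hc2 : c < 2 * ℓ := Finset.mem_range.mp hc
      rcases lt_or_ge c ℓ with h | h
      · rw [fdir ℓ c h, pre_dir_sing _ _ _ hℓ0]
        have : μ {(ℓ:ℝ) * 0 - (c:ℝ)} = 0 := by
          refine measure_mono_null ?_ hIio
          simp only [singleton_subset_iff, mem_Iio]
          have : (0:ℝ) < c := by exact_mod_cast Nat.pos_of_ne_zero h1
          linarith
        rw [this, mul_zero]
      · rw [fflip ℓ c h, pre_flip_sing _ _ _ hℓ0]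
        have : μ {((c - ℓ + 1 : ℕ) : ℝ) - (ℓ:ℝ) * 0} = 0 := by
          refine measure_mono_null ?_ hIoi
          simp only [singleton_subset_iff, mem_Ioi]
          have : (2 : ℝ) ≤ ((c - ℓ + 1 : ℕ) : ℝ) := by exact_mod_cast (by omega : 2 ≤ c - ℓ + 1)
          linarith
        rw [this, mul_zero]
  -- equation for μ{1}
  have e1 : μ {(1:ℝ)} = ENNReal.ofReal (p (ℓ-1)) * μ {(1:ℝ)}
      + ENNReal.ofReal (p (2*ℓ-1)) * μ {(0:ℝ)} := by
    conv_lhs => rw [mu_apply ℓ p μ hself {1} (measurableSet_singleton 1)]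
    rw [Finset.sum_eq_add_of_mem (ℓ-1) (2*ℓ-1) (by simp; omega) (by simp; omega) (by omega)
      (fun c hc hne => ?_)]
    · have P3 : simMapT ℓ (ℓ-1) ⁻¹' {(1:ℝ)} = {(1:ℝ)} := by
        rw [fdir ℓ (ℓ-1) (by omega), pre_dir_sing _ _ _ hℓ0,
          show ((ℓ - 1 : ℕ) : ℝ) = (ℓ:ℝ) - 1 by rw [Nat.cast_sub (by omega), Nat.cast_one]]
        norm_num
      have P4 : simMapT ℓ (2*ℓ-1) ⁻¹' {(1:ℝ)} = {(0:ℝ)} := by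
        rw [fflip ℓ (2*ℓ-1) (by omega), pre_flip_sing _ _ _ hℓ0,
          show 2*ℓ-1-ℓ+1 = ℓ by omega]
        norm_num
      rw [P3, P4]
    · obtain ⟨h1, h2⟩ := hne
      have hc2 : c < 2 * ℓ := Finset.mem_range.mp hc
      rcases lt_or_ge c ℓ with h | h
      · rw [fdir ℓ c h, pre_dir_sing _ _ _ hℓ0]
        have : μ {(ℓ:ℝ) * 1 - (c:ℝ)} = 0 := by
          refine measure_mono_null ?_ hIoi
          simp only [singleton_subset_iff, mem_Ioi]
          have h2' : (c:ℝ) + 2 ≤ (ℓ:ℝ) := by exact_mod_cast (by omega : c + 2 ≤ ℓ)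
          linarith
        rw [this, mul_zero]
      · rw [fflip ℓ c h, pre_flip_sing _ _ _ hℓ0]
        have : μ {((c - ℓ + 1 : ℕ) : ℝ) - (ℓ:ℝ) * 1} = 0 := by
          refine measure_mono_null ?_ hIio
          simp only [singleton_subset_iff, mem_Iio]
          have : ((c - ℓ + 1 : ℕ) : ℝ) + 1 ≤ (ℓ:ℝ) := by
            exact_mod_cast (by omega : (c - ℓ + 1) + 1 ≤ ℓ)
          linarith
        rw [this, mul_zero]
  -- pass to real numbers
  set a := (μ {(0:ℝ)}).toReal with hadef
  set b := (μ {(1:ℝ)}).toReal with hbdef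
  have fin0 : μ {(0:ℝ)} ≠ ⊤ := measure_ne_top μ _
  have fin1 : μ {(1:ℝ)} ≠ ⊤ := measure_ne_top μ _
  have ra : a = p 0 * a + p ℓ * b := by
    conv_lhs => rw [hadef, e0]
    rw [ENNReal.toReal_add (by finiteness) (by finiteness), ENNReal.toReal_mul,
      ENNReal.toReal_mul, ENNReal.toReal_ofReal (hp _), ENNReal.toReal_ofReal (hp _)]
  have rb : b = p (ℓ-1) * b + p (2*ℓ-1) * a := by
    conv_lhs => rw [hbdef, e1]
    rw [ENNReal.toReal_add (by finiteness) (by finiteness), ENNReal.toReal_mul,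
      ENNReal.toReal_mul, ENNReal.toReal_ofReal (hp _), ENNReal.toReal_ofReal (hp _)]
  have hsum4 : p 0 + p (ℓ-1) + p ℓ + p (2*ℓ-1) ≤ 1 := by
    have hsub : ({0, ℓ-1, ℓ, 2*ℓ-1} : Finset ℕ) ⊆ Finset.range (2*ℓ) := by
      intro i hi
      simp only [Finset.mem_insert, Finset.mem_singleton] at hi
      rw [Finset.mem_range]
      omega
    have := Finset.sum_le_sum_of_subset_of_nonneg hsub (fun i _ _ => hp i)
    rw [hsum] at this
    refine le_trans (le_of_eq ?_) this
    rw [Finset.sum_insert (by simp; omega), Finset.sum_insert (by simp; omega),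
      Finset.sum_insert (by simp; omega), Finset.sum_singleton]
    ring
  have hq02 : 0 < p 0 + p ℓ := by simpa using hpos 0 (by omega)
  have hq13 : 0 < p (ℓ-1) + p (2*ℓ-1) := by
    have := hpos (ℓ-1) (by omega)
    rwa [show ℓ-1+ℓ = 2*ℓ-1 by omega] at this
  obtain ⟨ha0, hb0⟩ := atoms_alg (p 0) (p (ℓ-1)) (p ℓ) (p (2*ℓ-1)) a b
    (hp _) (hp _) (hp _) (hp _) hsum4 hq02 hq13 ENNReal.toReal_nonneg ENNReal.toReal_nonneg ra rb
  constructor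
  · exact (ENNReal.toReal_eq_zero_iff _).mp ha0 |>.resolve_right fin0
  · exact (ENNReal.toReal_eq_zero_iff _).mp hb0 |>.resolve_right fin1

lemma pre_dir_Ico (L c u v : ℝ) (hL : 0 < L) :
    (fun x : ℝ => x / L + c / L) ⁻¹' Ico u v = Ico (L * u - c) (L * v - c) := by
  ext x
  simp only [mem_preimage, mem_Ico, ← add_div, le_div_iff₀ hL, div_lt_iff₀ hL]
  constructor <;> rintro ⟨h1, h2⟩ <;> constructor <;> linarith

lemma pre_dir_Ioc (L c u v : ℝ) (hL : 0 < L) :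
    (fun x : ℝ => x / L + c / L) ⁻¹' Ioc u v = Ioc (L * u - c) (L * v - c) := by
  ext x
  simp only [mem_preimage, mem_Ioc, ← add_div, lt_div_iff₀ hL, div_le_iff₀ hL]
  constructor <;> rintro ⟨h1, h2⟩ <;> constructor <;> linarith

lemma pre_flip_Ico (L d u v : ℝ) (hL : 0 < L) :
    (fun x : ℝ => -x / L + d / L) ⁻¹' Ico u v = Ioc (d - L * v) (d - L * u) := by
  ext x
  simp only [mem_preimage, mem_Ico, mem_Ioc, ← add_div, le_div_iff₀ hL, div_lt_iff₀ hL]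
  constructor <;> rintro ⟨h1, h2⟩ <;> constructor <;> linarith

lemma pre_flip_Ioc (L d u v : ℝ) (hL : 0 < L) :
    (fun x : ℝ => -x / L + d / L) ⁻¹' Ioc u v = Ico (d - L * v) (d - L * u) := by
  ext x
  simp only [mem_preimage, mem_Ioc, mem_Ico, ← add_div, lt_div_iff₀ hL, div_le_iff₀ hL]
  constructor <;> rintro ⟨h1, h2⟩ <;> constructor <;> linarith

lemma step1 (ℓ : ℕ) (hℓ : 2 ≤ ℓ) (p : ℕ → ℝ) (μ : Measure ℝ)
    (hself : μ = ∑ i ∈ Finset.range (2 * ℓ), ENNReal.ofReal (p i) • μ.map (simMapT ℓ i))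
    (hIic : μ (Iic 0) = 0) (hIci : μ (Ici 1) = 0)
    (ε : ℕ) (hε : ε < ℓ) (a h : ℝ) (ha : 0 ≤ a) (hh : 0 < h) (hah : a + h ≤ 1) :
    μ (Ico (((ε:ℝ) + a)/ℓ) (((ε:ℝ) + a + h)/ℓ)) =
      ENNReal.ofReal (p ε) * μ (Ico a (a+h))
        + ENNReal.ofReal (p (ε+ℓ)) * μ (Ioc (1-a-h) (1-a)) := by
  have hℓ0 : (0:ℝ) < ℓ := by positivity
  conv_lhs => rw [mu_apply ℓ p μ hself _ measurableSet_Ico]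
  rw [Finset.sum_eq_add_of_mem ε (ε+ℓ) (by rw [Finset.mem_range]; omega)
      (by rw [Finset.mem_range]; omega) (by omega) (fun c hc hne => ?_)]
  · have P1 : simMapT ℓ ε ⁻¹' Ico (((ε:ℝ) + a)/ℓ) (((ε:ℝ) + a + h)/ℓ) = Ico a (a+h) := by
      rw [fdir ℓ ε hε, pre_dir_Ico _ _ _ _ hℓ0,
        show (ℓ:ℝ) * (((ε:ℝ)+a)/ℓ) - (ε:ℝ) = a by field_simp <;> ring,
        show (ℓ:ℝ) * (((ε:ℝ)+a+h)/ℓ) - (ε:ℝ) = a + h by field_simp <;> ring]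
    have P2 : simMapT ℓ (ε+ℓ) ⁻¹' Ico (((ε:ℝ) + a)/ℓ) (((ε:ℝ) + a + h)/ℓ)
        = Ioc (1-a-h) (1-a) := by
      rw [fflip ℓ (ε+ℓ) (by omega), show ε+ℓ-ℓ+1 = ε+1 by omega, pre_flip_Ico _ _ _ _ hℓ0,
        show ((ε+1 : ℕ):ℝ) - (ℓ:ℝ) * (((ε:ℝ)+a+h)/ℓ) = 1-a-h by push_cast; field_simp <;> ring,
        show ((ε+1 : ℕ):ℝ) - (ℓ:ℝ) * (((ε:ℝ)+a)/ℓ) = 1-a by push_cast; field_simp <;> ring]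
    rw [P1, P2]
  · obtain ⟨h1, h2⟩ := hne
    have hc2 : c < 2 * ℓ := Finset.mem_range.mp hc
    have hz : μ (simMapT ℓ c ⁻¹' Ico (((ε:ℝ) + a)/ℓ) (((ε:ℝ) + a + h)/ℓ)) = 0 := by
      rcases lt_or_ge c ℓ with hcl | hcl
      · have hpre : simMapT ℓ c ⁻¹' Ico (((ε:ℝ) + a)/ℓ) (((ε:ℝ) + a + h)/ℓ)
            = Ico ((ε:ℝ)+a-c) ((ε:ℝ)+a+h-c) := by
          rw [fdir ℓ c hcl, pre_dir_Ico _ _ _ _ hℓ0,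
            show (ℓ:ℝ) * (((ε:ℝ)+a)/ℓ) - (c:ℝ) = (ε:ℝ)+a-c by field_simp <;> ring,
            show (ℓ:ℝ) * (((ε:ℝ)+a+h)/ℓ) - (c:ℝ) = (ε:ℝ)+a+h-c by field_simp <;> ring]
        rw [hpre]
        rcases lt_or_gt_of_ne h1 with hlt | hgt
        · -- c < ε : interval lies in [1, ∞)
          refine measure_mono_null (fun x hx => ?_) hIci
          have hcast : (c:ℝ) + 1 ≤ ε := by exact_mod_cast hlt
          exact le_trans (by linarith) hx.1
        · -- c > ε : interval lies in (-∞, 0]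
          refine measure_mono_null (fun x hx => ?_) hIic
          have hcast : (ε:ℝ) + 1 ≤ c := by exact_mod_cast hgt
          have := hx.2
          simp only [mem_Iic]
          linarith
      · have hcast : ((c - ℓ + 1 : ℕ) : ℝ) = (c:ℝ) - ℓ + 1 := by
          rw [Nat.cast_add, Nat.cast_sub hcl, Nat.cast_one]
        have hpre : simMapT ℓ c ⁻¹' Ico (((ε:ℝ) + a)/ℓ) (((ε:ℝ) + a + h)/ℓ)
            = Ioc ((c:ℝ)-ℓ+1-ε-a-h) ((c:ℝ)-ℓ+1-ε-a) := by
          rw [fflip ℓ c hcl, pre_flip_Ico _ _ _ _ hℓ0, hcast,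
            show (c:ℝ)-ℓ+1 - (ℓ:ℝ) * (((ε:ℝ)+a+h)/ℓ) = (c:ℝ)-ℓ+1-ε-a-h by field_simp <;> ring,
            show (c:ℝ)-ℓ+1 - (ℓ:ℝ) * (((ε:ℝ)+a)/ℓ) = (c:ℝ)-ℓ+1-ε-a by field_simp <;> ring]
        rw [hpre]
        rcases lt_or_gt_of_ne h2 with hlt | hgt
        · -- c < ε + ℓ : interval lies in (-∞, 0]
          refine measure_mono_null (fun x hx => ?_) hIic
          have hcast2 : (c:ℝ) + 1 ≤ (ε:ℝ) + ℓ := by exact_mod_cast hlt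
          have := hx.2
          simp only [mem_Iic]
          linarith
        · -- c > ε + ℓ : interval lies in [1, ∞)
          refine measure_mono_null (fun x hx => ?_) hIci
          have hcast2 : (ε:ℝ) + (ℓ:ℝ) + 1 ≤ c := by exact_mod_cast hgt
          have := hx.1
          simp only [mem_Ici]
          linarith
    rw [hz, mul_zero]

lemma step2 (ℓ : ℕ) (hℓ : 2 ≤ ℓ) (p : ℕ → ℝ) (μ : Measure ℝ)
    (hself : μ = ∑ i ∈ Finset.range (2 * ℓ), ENNReal.ofReal (p i) • μ.map (simMapT ℓ i))
    (hIic : μ (Iic 0) = 0) (hIci : μ (Ici 1) = 0)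
    (ε : ℕ) (hε : ε < ℓ) (a h : ℝ) (ha : 0 ≤ a) (hh : 0 < h) (hah : a + h ≤ 1) :
    μ (Ioc (1 - ((ε:ℝ) + a + h)/ℓ) (1 - ((ε:ℝ) + a)/ℓ)) =
      ENNReal.ofReal (p (ℓ-1-ε)) * μ (Ioc (1-a-h) (1-a))
        + ENNReal.ofReal (p (2*ℓ-1-ε)) * μ (Ico a (a+h)) := by
  have hℓ0 : (0:ℝ) < ℓ := by positivity
  conv_lhs => rw [mu_apply ℓ p μ hself _ measurableSet_Ioc]
  rw [Finset.sum_eq_add_of_mem (ℓ-1-ε) (2*ℓ-1-ε) (by rw [Finset.mem_range]; omega)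
      (by rw [Finset.mem_range]; omega) (by omega) (fun c hc hne => ?_)]
  · have P1 : simMapT ℓ (ℓ-1-ε) ⁻¹' Ioc (1 - ((ε:ℝ) + a + h)/ℓ) (1 - ((ε:ℝ) + a)/ℓ)
        = Ioc (1-a-h) (1-a) := by
      rw [fdir ℓ (ℓ-1-ε) (by omega), pre_dir_Ioc _ _ _ _ hℓ0,
        show ((ℓ-1-ε : ℕ):ℝ) = (ℓ:ℝ)-1-ε by
          rw [Nat.cast_sub (by omega), Nat.cast_sub (by omega), Nat.cast_one],
        show (ℓ:ℝ) * (1 - ((ε:ℝ)+a+h)/ℓ) - ((ℓ:ℝ)-1-ε) = 1-a-h by field_simp <;> ring,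
        show (ℓ:ℝ) * (1 - ((ε:ℝ)+a)/ℓ) - ((ℓ:ℝ)-1-ε) = 1-a by field_simp <;> ring]
    have P2 : simMapT ℓ (2*ℓ-1-ε) ⁻¹' Ioc (1 - ((ε:ℝ) + a + h)/ℓ) (1 - ((ε:ℝ) + a)/ℓ)
        = Ico a (a+h) := by
      rw [fflip ℓ (2*ℓ-1-ε) (by omega), show 2*ℓ-1-ε-ℓ+1 = ℓ-ε by omega,
        pre_flip_Ioc _ _ _ _ hℓ0,
        show ((ℓ-ε : ℕ):ℝ) = (ℓ:ℝ)-ε by rw [Nat.cast_sub (by omega)],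
        show (ℓ:ℝ)-ε - (ℓ:ℝ) * (1 - ((ε:ℝ)+a)/ℓ) = a by field_simp <;> ring,
        show (ℓ:ℝ)-ε - (ℓ:ℝ) * (1 - ((ε:ℝ)+a+h)/ℓ) = a + h by field_simp <;> ring]
    rw [P1, P2]
  · obtain ⟨h1, h2⟩ := hne
    have hc2 : c < 2 * ℓ := Finset.mem_range.mp hc
    have hz : μ (simMapT ℓ c ⁻¹' Ioc (1 - ((ε:ℝ) + a + h)/ℓ) (1 - ((ε:ℝ) + a)/ℓ)) = 0 := by
      rcases lt_or_ge c ℓ with hcl | hcl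
      · have hpre : simMapT ℓ c ⁻¹' Ioc (1 - ((ε:ℝ) + a + h)/ℓ) (1 - ((ε:ℝ) + a)/ℓ)
            = Ioc ((ℓ:ℝ)-ε-a-h-c) ((ℓ:ℝ)-ε-a-c) := by
          rw [fdir ℓ c hcl, pre_dir_Ioc _ _ _ _ hℓ0,
            show (ℓ:ℝ) * (1 - ((ε:ℝ)+a+h)/ℓ) - (c:ℝ) = (ℓ:ℝ)-ε-a-h-c by field_simp <;> ring,
            show (ℓ:ℝ) * (1 - ((ε:ℝ)+a)/ℓ) - (c:ℝ) = (ℓ:ℝ)-ε-a-c by field_simp <;> ring]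
        rw [hpre]
        have hne' : c ≠ ℓ-1-ε := h1
        rcases lt_or_gt_of_ne hne' with hlt | hgt
        · -- c < ℓ-1-ε : interval lies in [1, ∞)
          refine measure_mono_null (fun x hx => ?_) hIci
          have hcast : (c:ℝ) + 2 + ε ≤ ℓ := by
            exact_mod_cast (by omega : c + 2 + ε ≤ ℓ)
          have := hx.1
          simp only [mem_Ici]
          linarith
        · -- c > ℓ-1-ε : interval lies in (-∞, 0]
          refine measure_mono_null (fun x hx => ?_) hIic
          have hcast : (ℓ:ℝ) ≤ (c:ℝ) + ε := by exact_mod_cast (by omega : ℓ ≤ c + ε)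
          have := hx.2
          simp only [mem_Iic]
          linarith
      · have hcast : ((c - ℓ + 1 : ℕ) : ℝ) = (c:ℝ) - ℓ + 1 := by
          rw [Nat.cast_add, Nat.cast_sub hcl, Nat.cast_one]
        have hpre : simMapT ℓ c ⁻¹' Ioc (1 - ((ε:ℝ) + a + h)/ℓ) (1 - ((ε:ℝ) + a)/ℓ)
            = Ico ((c:ℝ)+ε+a+1-2*ℓ) ((c:ℝ)+ε+a+h+1-2*ℓ) := by
          rw [fflip ℓ c hcl, pre_flip_Ioc _ _ _ _ hℓ0, hcast,
            show (c:ℝ)-ℓ+1 - (ℓ:ℝ) * (1 - ((ε:ℝ)+a)/ℓ) = (c:ℝ)+ε+a+1-2*ℓ by field_simp <;> ring,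
            show (c:ℝ)-ℓ+1 - (ℓ:ℝ) * (1 - ((ε:ℝ)+a+h)/ℓ) = (c:ℝ)+ε+a+h+1-2*ℓ by field_simp <;> ring]
        rw [hpre]
        rcases lt_or_gt_of_ne h2 with hlt | hgt
        · -- c < 2ℓ-1-ε : interval lies in (-∞, 0)
          refine measure_mono_null (fun x hx => ?_) hIic
          have hcast2 : (c:ℝ) + ε + 2 ≤ 2*(ℓ:ℝ) := by exact_mod_cast (by omega : c + ε + 2 ≤ 2*ℓ)
          have := hx.2
          simp only [mem_Iic]
          linarith
        · -- c > 2ℓ-1-ε : interval lies in [1, ∞)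
          refine measure_mono_null (fun x hx => ?_) hIci
          have hcast2 : 2*(ℓ:ℝ) ≤ (c:ℝ) + ε := by exact_mod_cast (by omega : 2*ℓ ≤ c + ε)
          have := hx.1
          simp only [mem_Ici]
          linarith
    rw [hz, mul_zero]

lemma step1R (ℓ : ℕ) (hℓ : 2 ≤ ℓ) (p : ℕ → ℝ) (hp : ∀ i, 0 ≤ p i) (μ : Measure ℝ)
    [IsProbabilityMeasure μ]
    (hself : μ = ∑ i ∈ Finset.range (2 * ℓ), ENNReal.ofReal (p i) • μ.map (simMapT ℓ i))
    (hIic : μ (Iic 0) = 0) (hIci : μ (Ici 1) = 0)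
    (ε : ℕ) (hε : ε < ℓ) (a h : ℝ) (ha : 0 ≤ a) (hh : 0 < h) (hah : a + h ≤ 1) :
    (μ (Ico (((ε:ℝ) + a)/ℓ) (((ε:ℝ) + a + h)/ℓ))).toReal =
      p ε * (μ (Ico a (a+h))).toReal + p (ε+ℓ) * (μ (Ioc (1-a-h) (1-a))).toReal := by
  rw [step1 ℓ hℓ p μ hself hIic hIci ε hε a h ha hh hah,
    ENNReal.toReal_add (ENNReal.mul_ne_top ENNReal.ofReal_ne_top (measure_ne_top μ _))
      (ENNReal.mul_ne_top ENNReal.ofReal_ne_top (measure_ne_top μ _)),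
    ENNReal.toReal_mul, ENNReal.toReal_mul, ENNReal.toReal_ofReal (hp _),
    ENNReal.toReal_ofReal (hp _)]

lemma step2R (ℓ : ℕ) (hℓ : 2 ≤ ℓ) (p : ℕ → ℝ) (hp : ∀ i, 0 ≤ p i) (μ : Measure ℝ)
    [IsProbabilityMeasure μ]
    (hself : μ = ∑ i ∈ Finset.range (2 * ℓ), ENNReal.ofReal (p i) • μ.map (simMapT ℓ i))
    (hIic : μ (Iic 0) = 0) (hIci : μ (Ici 1) = 0)
    (ε : ℕ) (hε : ε < ℓ) (a h : ℝ) (ha : 0 ≤ a) (hh : 0 < h) (hah : a + h ≤ 1) :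
    (μ (Ioc (1 - ((ε:ℝ) + a + h)/ℓ) (1 - ((ε:ℝ) + a)/ℓ))).toReal =
      p (ℓ-1-ε) * (μ (Ioc (1-a-h) (1-a))).toReal
        + p (2*ℓ-1-ε) * (μ (Ico a (a+h))).toReal := by
  rw [step2 ℓ hℓ p μ hself hIic hIci ε hε a h ha hh hah,
    ENNReal.toReal_add (ENNReal.mul_ne_top ENNReal.ofReal_ne_top (measure_ne_top μ _))
      (ENNReal.mul_ne_top ENNReal.ofReal_ne_top (measure_ne_top μ _)),
    ENNReal.toReal_mul, ENNReal.toReal_mul, ENNReal.toReal_ofReal (hp _),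
    ENNReal.toReal_ofReal (hp _)]

lemma tail_sum (ℓ n : ℕ) (hℓ : 2 ≤ ℓ) (ε : Fin (n+1) → ℕ) :
    ∑ i : Fin n, (ε i.succ : ℝ) / (ℓ:ℝ) ^ ((i.succ : ℕ) + 1)
      = (∑ i : Fin n, (ε i.succ : ℝ) / (ℓ:ℝ) ^ ((i:ℕ) + 1)) / ℓ := by
  rw [Finset.sum_div]
  refine Finset.sum_congr rfl fun i _ => ?_
  rw [Fin.val_succ, show (i:ℕ) + 1 + 1 = ((i:ℕ) + 1) + 1 by ring, pow_succ, ← div_div]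

lemma digit_sum_le (ℓ : ℕ) (hℓ : 2 ≤ ℓ) : ∀ (n : ℕ) (ε : Fin n → ℕ), (∀ i, ε i < ℓ) →
    (∑ i : Fin n, (ε i : ℝ) / (ℓ:ℝ) ^ ((i : ℕ) + 1)) + 1 / (ℓ:ℝ) ^ n ≤ 1 := by
  have hℓ0 : (0:ℝ) < ℓ := by positivity
  intro n
  induction n with
  | zero => intro ε _; simp
  | succ n ih =>
    intro ε hε
    rw [Fin.sum_univ_succ, tail_sum ℓ n hℓ ε]
    set T := ∑ i : Fin n, (ε i.succ : ℝ) / (ℓ:ℝ) ^ ((i:ℕ) + 1) with hT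
    have ihT : T + 1 / (ℓ:ℝ)^n ≤ 1 := ih (fun i => ε i.succ) (fun i => hε _)
    have hT0 : 0 ≤ T := Finset.sum_nonneg fun i _ => by positivity
    have hε0 : (ε 0 : ℝ) + 1 ≤ ℓ := by exact_mod_cast hε 0
    have h1 : (ε 0 : ℝ) / (ℓ:ℝ)^((0 : Fin (n+1)).val + 1) ≤ ((ℓ:ℝ)-1)/ℓ := by
      simp only [Fin.val_zero, zero_add, pow_one]
      exact div_le_div_of_nonneg_right (by linarith) hℓ0.le
    have h2 : T / ℓ ≤ (1 - 1/(ℓ:ℝ)^n)/ℓ := by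
      exact div_le_div_of_nonneg_right (by linarith) hℓ0.le
    have h3 : ((ℓ:ℝ)-1)/ℓ + (1 - 1/(ℓ:ℝ)^n)/ℓ + 1/(ℓ:ℝ)^(n+1) = 1 := by
      rw [pow_succ]
      field_simp
      ring
    linarith

lemma main_ind (ℓ : ℕ) (hℓ : 2 ≤ ℓ) (p : ℕ → ℝ) (hp : ∀ i, 0 ≤ p i)
    (hsum : ∑ i ∈ Finset.range (2 * ℓ), p i = 1)
    (hpos : ∀ i < ℓ, 0 < p i + p (i + ℓ))
    (μ : Measure ℝ) [IsProbabilityMeasure μ]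
    (hself : μ = ∑ i ∈ Finset.range (2 * ℓ), ENNReal.ofReal (p i) • μ.map (simMapT ℓ i)) :
    ∀ (n : ℕ) (ε : Fin n → ℕ), (∀ i, ε i < ℓ) →
      (μ (Ico (∑ i : Fin n, (ε i : ℝ) / (ℓ:ℝ) ^ ((i:ℕ)+1))
          ((∑ i : Fin n, (ε i : ℝ) / (ℓ:ℝ) ^ ((i:ℕ)+1)) + 1/(ℓ:ℝ)^n))).toReal
        = (List.ofFn fun i => MmatT ℓ p (ε i)).prod 0 0
            + (List.ofFn fun i => MmatT ℓ p (ε i)).prod 0 1 ∧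
      (μ (Ioc (1 - (∑ i : Fin n, (ε i : ℝ) / (ℓ:ℝ) ^ ((i:ℕ)+1)) - 1/(ℓ:ℝ)^n)
          (1 - ∑ i : Fin n, (ε i : ℝ) / (ℓ:ℝ) ^ ((i:ℕ)+1)))).toReal
        = (List.ofFn fun i => MmatT ℓ p (ε i)).prod 1 0
            + (List.ofFn fun i => MmatT ℓ p (ε i)).prod 1 1 := by
  have hℓ0 : (0:ℝ) < ℓ := by positivity
  obtain ⟨hIio, hIoi⟩ := muIio ℓ hℓ p hp hsum μ hself
  obtain ⟨h0, h1⟩ := muAtoms ℓ hℓ p hp hsum hpos μ hself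
  have hIic : μ (Iic 0) = 0 := by
    refine measure_mono_null (fun x hx => ?_) (measure_union_null hIio h0)
    rcases lt_or_eq_of_le (mem_Iic.mp hx) with h | h
    · exact Or.inl h
    · exact Or.inr h
  have hIci : μ (Ici 1) = 0 := by
    refine measure_mono_null (fun x hx => ?_) (measure_union_null hIoi h1)
    rcases lt_or_eq_of_le (mem_Ici.mp hx) with h | h
    · exact Or.inl h
    · exact Or.inr h.symm
  intro n
  induction n with
  | zero =>
    intro ε _
    have hIco : μ (Ico (0:ℝ) 1) = 1 := by
      refine le_antisymm prob_le_one ?_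
      calc (1:ℝ≥0∞) = μ univ := measure_univ.symm
        _ ≤ μ (Iic 0 ∪ (Ico 0 1 ∪ Ici 1)) := measure_mono (fun x _ => by
            rcases le_or_gt x 0 with h | h
            · exact Or.inl h
            · rcases lt_or_ge x 1 with h' | h'
              · exact Or.inr (Or.inl ⟨h.le, h'⟩)
              · exact Or.inr (Or.inr h'))
        _ ≤ μ (Iic 0) + (μ (Ico 0 1) + μ (Ici 1)) :=
            (measure_union_le _ _).trans (add_le_add le_rfl (measure_union_le _ _))
        _ = μ (Ico 0 1) := by rw [hIic, hIci, zero_add, add_zero]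
    have hIoc : μ (Ioc (0:ℝ) 1) = 1 := by
      refine le_antisymm prob_le_one ?_
      calc (1:ℝ≥0∞) = μ univ := measure_univ.symm
        _ ≤ μ (Iic 0 ∪ (Ioc 0 1 ∪ Ici 1)) := measure_mono (fun x _ => by
            rcases le_or_gt x 0 with h | h
            · exact Or.inl h
            · rcases le_or_gt x 1 with h' | h'
              · exact Or.inr (Or.inl ⟨h, h'⟩)
              · exact Or.inr (Or.inr h'.le))
        _ ≤ μ (Iic 0) + (μ (Ioc 0 1) + μ (Ici 1)) :=
            (measure_union_le _ _).trans (add_le_add le_rfl (measure_union_le _ _))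
        _ = μ (Ioc 0 1) := by rw [hIic, hIci, zero_add, add_zero]
    simp only [Finset.univ_eq_empty, Finset.sum_empty, List.ofFn_zero, List.prod_nil,
      pow_zero, zero_add, sub_zero]
    norm_num
    rw [hIco, hIoc]
    simp [Matrix.one_apply]
  | succ n ih =>
    intro ε hε
    have IH := ih (fun i => ε i.succ) (fun i => hε _)
    set a := ∑ i : Fin n, ((ε i.succ : ℝ)) / (ℓ:ℝ) ^ ((i:ℕ)+1) with haT
    obtain ⟨IH1, IH2⟩ := IH
    have ha : 0 ≤ a := Finset.sum_nonneg fun i _ => by positivity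
    have hh : (0:ℝ) < 1/(ℓ:ℝ)^n := by positivity
    have hah : a + 1/(ℓ:ℝ)^n ≤ 1 := digit_sum_le ℓ hℓ n (fun i => ε i.succ) (fun i => hε _)
    have hW : ∑ i : Fin (n+1), (ε i : ℝ) / (ℓ:ℝ) ^ ((i:ℕ)+1) = ((ε 0 : ℝ) + a)/ℓ := by
      rw [Fin.sum_univ_succ, tail_sum ℓ n hℓ ε, ← haT]
      simp only [Fin.val_zero, zero_add, pow_one]
      rw [add_div]
    have hW2 : ((∑ i : Fin (n+1), (ε i : ℝ) / (ℓ:ℝ) ^ ((i:ℕ)+1)) + 1/(ℓ:ℝ)^(n+1))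
        = ((ε 0 : ℝ) + a + 1/(ℓ:ℝ)^n)/ℓ := by
      rw [hW, pow_succ]
      field_simp
    have hprod : (List.ofFn fun i : Fin (n+1) => MmatT ℓ p (ε i)).prod
        = MmatT ℓ p (ε 0) * (List.ofFn fun i : Fin n => MmatT ℓ p (ε i.succ)).prod := by
      rw [List.ofFn_succ, List.prod_cons]
    set Q := (List.ofFn fun i : Fin n => MmatT ℓ p (ε i.succ)).prod with hQ
    have hM : ∀ j k, (MmatT ℓ p (ε 0) * Q) j k
        = MmatT ℓ p (ε 0) j 0 * Q 0 k + MmatT ℓ p (ε 0) j 1 * Q 1 k := by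
      intro j k
      rw [Matrix.mul_apply, Fin.sum_univ_two]
    have hM00 : MmatT ℓ p (ε 0) 0 0 = p (ε 0) := by simp [MmatT]
    have hM01 : MmatT ℓ p (ε 0) 0 1 = p (ε 0 + ℓ) := by simp [MmatT]
    have hM10 : MmatT ℓ p (ε 0) 1 0 = p (2*ℓ - 1 - ε 0) := by simp [MmatT]
    have hM11 : MmatT ℓ p (ε 0) 1 1 = p (ℓ - 1 - ε 0) := by simp [MmatT]
    constructor
    · rw [hW2, hW,
        step1R ℓ hℓ p hp μ hself hIic hIci (ε 0) (hε 0) a (1/(ℓ:ℝ)^n) ha hh hah,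
        IH1, IH2, hprod, hM 0 0, hM 0 1, hM00, hM01]
      ring
    · rw [sub_sub, hW2, hW,
        step2R ℓ hℓ p hp μ hself hIic hIci (ε 0) (hε 0) a (1/(ℓ:ℝ)^n) ha hh hah,
        IH1, IH2, hprod, hM 1 0, hM 1 1, hM10, hM11]
      ring

end Aux

/-- `μ(I_{ε₁⋯ε_n}) = ‖M_{ε₁}⋯M_{ε_n}‖₁` for the self-similar measure `μ`. -/
theorem stmt4 (ℓ : ℕ) (hℓ : 2 ≤ ℓ) (p : ℕ → ℝ) (hp : ∀ i, 0 ≤ p i)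
    (hsum : ∑ i ∈ Finset.range (2 * ℓ), p i = 1)
    (hpos : ∀ i < ℓ, 0 < p i + p (i + ℓ))
    (μ : Measure ℝ) [IsProbabilityMeasure μ]
    (hself : μ = ∑ i ∈ Finset.range (2 * ℓ), ENNReal.ofReal (p i) • μ.map (simMapT ℓ i))
    (n : ℕ) (ε : Fin n → ℕ) (hε : ∀ i, ε i < ℓ) :
    mss μ (wordI ℓ n ε) = normOne (List.ofFn (fun i => MmatT ℓ p (ε i))).prod := by
  exact (main_ind ℓ hℓ p hp hsum hpos μ hself n ε hε).1

end
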